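/- Let A be a finite set with at least two elements, let A^ℤ carry the product topology (a compact metrizable space), and let T : A^ℤ → A^ℤ be the shift (Tx)(n) = x(n+1). Let Ω ⊆ A^ℤ be a nonempty closed T-invariant subset (a subshift) containing at least one point that is not T-periodic. Then (Ω,T) does not satisfy (GRP): there exists ω ∈ Ω whose forward orbit sequence {T^k ω}_{k≥0} does not have the repetition property. -/

import Mathlib

open Filter Topology

/-- A sequence in a metric space has the repetition property if for every `ε > 0` and
`r > 0` there is a positive integer `q` such that `dist (u k) (u (k+q)) < ε` for all
`k = 0, 1, …, ⌊r * q⌋`. -/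
def RepetitionProperty {Ω : Type*} [PseudoMetricSpace Ω] (u : ℕ → Ω) : Prop :=
  ∀ ε > (0 : ℝ), ∀ r > (0 : ℝ), ∃ q : ℕ, 0 < q ∧
    ∀ k : ℕ, k ≤ ⌊r * q⌋₊ → dist (u k) (u (k + q)) < ε

/-- The left shift on the full shift space `A^ℤ`. -/
def shiftMap {A : Type*} : (ℤ → A) → (ℤ → A) := fun x n => x (n + 1)

namespace SubshiftGRP

def zshift {A : Type*} (n : ℤ) (z : ℤ → A) : ℤ → A := fun j => z (j + n)

lemma shiftMap_iterate {A : Type*} (k : ℕ) (z : ℤ → A) (j : ℤ) :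
    (shiftMap^[k] z) j = z (j + k) := by
  induction k generalizing j with
  | zero => simp
  | succ k ih =>
    rw [Function.iterate_succ_apply']
    show (shiftMap^[k] z) (j+1) = _
    rw [ih]
    congr 1
    push_cast
    ring

lemma zshift_mem {A : Type*} {Ω : Set (ℤ → A)} (hinv : shiftMap '' Ω = Ω) :
    ∀ n : ℤ, ∀ z ∈ Ω, zshift n z ∈ Ω := by
  have hfwd : ∀ z ∈ Ω, zshift 1 z ∈ Ω := by
    intro z hz
    have : shiftMap z ∈ Ω := by
      rw [← hinv]; exact ⟨z, hz, rfl⟩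
    exact this
  have hbwd : ∀ z ∈ Ω, zshift (-1) z ∈ Ω := by
    intro z hz
    have hz' : z ∈ shiftMap '' Ω := by rw [hinv]; exact hz
    obtain ⟨w, hw, hwz⟩ := hz'
    have : zshift (-1) z = w := by
      funext j
      have : z (j + -1) = shiftMap w (j + -1) := by rw [hwz]
      rw [zshift, this]
      show w (j + -1 + 1) = w j
      congr 1; ring
    rwa [this]
  have key : ∀ n : ℤ, ∀ z ∈ Ω, zshift n z ∈ Ω := by
    intro n
    induction n using Int.induction_on with
    | zero => intro z hz; convert hz using 1; funext j; simp [zshift]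
    | succ k ih =>
      intro z hz
      have : zshift (k + 1) z = zshift 1 (zshift k z) := by
        funext j; simp [zshift]; ring_nf
      rw [this]; exact hfwd _ (ih z hz)
    | pred k ih =>
      intro z hz
      have : zshift (-(k:ℤ) - 1) z = zshift (-1) (zshift (-(k:ℤ)) z) := by
        funext j; simp [zshift]; ring_nf
      rw [this]; exact hbwd _ (ih z hz)
  exact key

variable {A : Type*}


/-- iterate a one-step period along an interval -/
lemma chain (x : ℤ → A) (p : ℕ) (a b : ℤ)
    (h : ∀ i, a ≤ i → i + p ≤ b → x i = x (i + p)) :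
    ∀ c : ℕ, ∀ i, a ≤ i → i + (c * p : ℕ) ≤ b → x i = x (i + (c * p : ℕ)) := by
  intro c
  induction c with
  | zero => intro i _ _; simp
  | succ c ih =>
    intro i hai hib
    have hp0 : (0:ℤ) ≤ (p:ℤ) := by positivity
    have h1 : x i = x (i + p) := by
      apply h i hai
      have : (p:ℤ) ≤ ((c+1) * p : ℕ) := by push_cast; nlinarith
      linarith
    have h2 : x (i + p) = x (i + p + (c * p : ℕ)) := by
      apply ih (i + p) (by linarith)
      have : i + ((c+1) * p : ℕ) = i + p + (c * p : ℕ) := by push_cast; ring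
      linarith [this ▸ hib]
    rw [h1, h2]
    congr 1
    push_cast; ring

/-- Fine–Wilf on integer intervals, congruence form. -/
lemma fw (x : ℤ → A) :
    ∀ s p : ℕ, 1 ≤ p → p ≤ s → ∀ a b : ℤ,
    (p : ℤ) + s - Nat.gcd p s ≤ b - a + 1 →
    (∀ i, a ≤ i → i + p ≤ b → x i = x (i + p)) →
    (∀ i, a ≤ i → i + s ≤ b → x i = x (i + s)) →
    ∀ i j, a ≤ i → i ≤ b → a ≤ j → j ≤ b → ((Nat.gcd p s : ℤ) ∣ j - i) → x i = x j := by
  intro s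
  induction s using Nat.strong_induction_on with
  | _ s IH =>
    intro p hp1 hps a b hlen hper_p hper_s i j hai hib haj hjb hdvd
    rcases eq_or_lt_of_le hps with heq | hlt
    · -- base case p = s
      subst heq
      rw [Nat.gcd_self] at hdvd
      rcases le_total i j with hij | hij
      · obtain ⟨e, he⟩ := hdvd
        have he0 : 0 ≤ e := by nlinarith [Int.natCast_pos.mpr hp1]
        obtain ⟨c, hc⟩ : ∃ c : ℕ, (c : ℤ) = e := ⟨e.toNat, Int.toNat_of_nonneg he0⟩
        have hj' : j = i + (c * p : ℕ) := by push_cast; rw [hc]; linarith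
        rw [hj']
        exact chain x p a b hper_p c i hai (by rw [← hj']; exact hjb)
      · obtain ⟨e, he⟩ := hdvd
        have he0 : e ≤ 0 := by nlinarith [Int.natCast_pos.mpr hp1]
        obtain ⟨c, hc⟩ : ∃ c : ℕ, (c : ℤ) = -e := ⟨(-e).toNat, Int.toNat_of_nonneg (by linarith)⟩
        have hi' : i = j + (c * p : ℕ) := by push_cast; rw [hc]; linarith
        exact (hi' ▸ chain x p a b hper_p c j haj (by rw [← hi']; exact hib)).symm
    · -- step case p < s
      set t := s - p with ht
      have ht1 : 1 ≤ t := by omega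
      have hts : t + p = s := by omega
      have hgt : Nat.gcd p t = Nat.gcd p s := by
        conv_rhs => rw [← hts]
        rw [Nat.gcd_add_self_right]
      set g := Nat.gcd p s with hg
      have hgp : g ∣ p := Nat.gcd_dvd_left p s
      have hgs : g ∣ s := Nat.gcd_dvd_right p s
      have hgt' : g ∣ t := by
        rw [← hgt]; exact Nat.gcd_dvd_right p t
      have hg1 : 1 ≤ g := Nat.gcd_pos_of_pos_left _ hp1
      have hgle : g ≤ t := Nat.le_of_dvd ht1 hgt'
      -- periods on [a, b - p]
      set b' := b - p with hb'
      have hper_p' : ∀ i, a ≤ i → i + p ≤ b' → x i = x (i + p) := by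
        intro i h1 h2; exact hper_p i h1 (by simp [hb'] at h2; linarith)
      have htsZ : ((t:ℤ) + p) = s := by exact_mod_cast congrArg (Nat.cast : ℕ → ℤ) hts
      have hper_t : ∀ i, a ≤ i → i + t ≤ b' → x i = x (i + t) := by
        intro i h1 h2
        have ht0 : (0:ℤ) ≤ (t:ℤ) := by positivity
        have hib : i + s ≤ b := by simp only [hb'] at h2; linarith
        have e1 : x i = x (i + s) := hper_s i h1 hib
        have e2 : x (i + t) = x (i + t + p) := by
          apply hper_p (i + t) (by linarith)
          simp only [hb'] at h2; linarith
        have e3 : i + t + p = i + s := by linarith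
        rw [e1, e2, e3]
      have hlen' : ∀ (u v : ℕ), u + v = s → (u:ℤ) + v - Nat.gcd u v ≤ b' - a + 1 → True := fun _ _ _ _ => trivial
      -- apply IH
      have hcon : ∀ i j, a ≤ i → i ≤ b' → a ≤ j → j ≤ b' → ((g:ℤ) ∣ j - i) → x i = x j := by
        rcases le_total p t with hpt | htp
        · have := IH t (by omega) p hp1 hpt a b'
            (by rw [hgt]
                have : ((t:ℤ) + p) = s := by exact_mod_cast congrArg (Nat.cast : ℕ → ℤ) hts
                simp [hb']; linarith)
            hper_p' hper_t
          intro i j h1 h2 h3 h4 h5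
          exact this i j h1 h2 h3 h4 (by rw [hgt]; exact h5)
        · have hgc : Nat.gcd t p = g := by rw [Nat.gcd_comm, hgt]
          have := IH p (by omega) t ht1 htp a b'
            (by rw [hgc]
                have : ((t:ℤ) + p) = s := by exact_mod_cast congrArg (Nat.cast : ℕ → ℤ) hts
                simp [hb']; linarith)
            hper_t hper_p'
          intro i j h1 h2 h3 h4 h5
          exact this i j h1 h2 h3 h4 (by rw [hgc]; exact h5)
      -- lift to [a, b]
      have hlift : ∀ i, a ≤ i → i ≤ b → ∃ i', a ≤ i' ∧ i' ≤ b' ∧ x i' = x i ∧ ((g:ℤ) ∣ i - i') := by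
        intro i h1 h2
        by_cases hc : i ≤ b'
        · exact ⟨i, h1, hc, rfl, by simp⟩
        · push_neg at hc
          have hbc : b - p < i := by simpa only [hb'] using hc
          have hsg : (g:ℤ) + p ≤ s := by exact_mod_cast (by omega : g + p ≤ s)
          have hip_a : a ≤ i - p := by linarith
          refine ⟨i - p, hip_a, by simp only [hb']; linarith, ?_, ?_⟩
          · have h := hper_p (i - p) hip_a (by linarith)
            have e : i - (p:ℤ) + p = i := by ring
            rw [e] at h
            exact h
          · have e : i - (i - (p:ℤ)) = (p:ℤ) := by ring
            rw [e]
            exact Int.natCast_dvd_natCast.mpr hgp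
      obtain ⟨i', hi1, hi2, hi3, hi4⟩ := hlift i hai hib
      obtain ⟨j', hj1, hj2, hj3, hj4⟩ := hlift j haj hjb
      rw [← hi3, ← hj3]
      apply hcon i' j' hi1 hi2 hj1 hj2
      have : j' - i' = (j - i) - (j - j') + (i - i') := by ring
      rw [this]
      exact dvd_add (dvd_sub hdvd hj4) hi4

lemma exists_sep {X : Type*} [MetricSpace X] {K : Set (X × X)}
    (hK : IsCompact K) (hne : ∀ p ∈ K, p.1 ≠ p.2) :
    ∃ ε > (0:ℝ), ∀ p ∈ K, ε ≤ dist p.1 p.2 := by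
  rcases K.eq_empty_or_nonempty with h | h
  · exact ⟨1, one_pos, by simp [h]⟩
  · obtain ⟨p₀, hp₀, hmin⟩ := hK.exists_isMinOn h (continuous_dist.continuousOn)
    refine ⟨dist p₀.1 p₀.2, dist_pos.mpr (hne p₀ hp₀), fun p hp => hmin hp⟩

end SubshiftGRP

open SubshiftGRP

set_option maxHeartbeats 2000000

/-- A subshift over a finite alphabet containing a non-periodic point never satisfies
(GRP): some point of the subshift has a forward orbit without the repetition property
(with respect to any metric compatible with the product topology). -/
theorem subshift_not_GRP {A : Type*} [Fintype A] [Nontrivial A]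
    [TopologicalSpace A] [DiscreteTopology A]
    (Ω : Set (ℤ → A)) (hne : Ω.Nonempty) (hclosed : IsClosed Ω)
    (hinv : shiftMap '' Ω = Ω)
    (hap : ∃ ω₀ ∈ Ω, ∀ p : ℕ, 0 < p → shiftMap^[p] ω₀ ≠ ω₀) :
    ∃ ω ∈ Ω, ∀ d : MetricSpace (ℤ → A),
      d.toUniformSpace.toTopologicalSpace = (inferInstance : TopologicalSpace (ℤ → A)) →
      ¬ @RepetitionProperty (ℤ → A) d.toPseudoMetricSpace (fun k => shiftMap^[k] ω) := by
  classical
  obtain ⟨x, hxΩ, hxap⟩ := hap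
  suffices h : ∃ ω ∈ Ω, ∃ r : ℕ, 0 < r ∧ ∀ q : ℕ, 0 < q →
      ∃ k : ℕ, k ≤ r * q ∧ ω (k : ℤ) ≠ ω ((k : ℤ) + (q : ℤ)) by
    obtain ⟨ω, hωΩ, r, hr, hW⟩ := h
    refine ⟨ω, hωΩ, ?_⟩
    intro d hd hRP
    simp only [RepetitionProperty] at hRP
    -- separation constant for the metric d
    set K : Set ((ℤ → A) × (ℤ → A)) := {P | P.1 0 ≠ P.2 0} with hKdef
    have hKclosedPi : IsClosed K := by
      have hc : Continuous fun P : (ℤ → A) × (ℤ → A) => ((P.1 0, P.2 0) : A × A) :=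
        ((continuous_apply (0:ℤ)).comp continuous_fst).prodMk
          ((continuous_apply (0:ℤ)).comp continuous_snd)
      have : K = (fun P : (ℤ → A) × (ℤ → A) => ((P.1 0, P.2 0) : A × A)) ⁻¹'
          {ab : A × A | ab.1 ≠ ab.2} := rfl
      rw [this]
      exact IsClosed.preimage hc (isClosed_discrete _)
    have hKcompPi : IsCompact K := hKclosedPi.isCompact
    have hKd : @IsCompact _
        (@instTopologicalSpaceProd _ _ d.toUniformSpace.toTopologicalSpace
          d.toUniformSpace.toTopologicalSpace) K := by
      rw [hd]; exact hKcompPi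
    obtain ⟨ε, hε, hsep⟩ := @exists_sep (ℤ → A) d K hKd
      (fun p hp hcontra => hp (by rw [hcontra]))
    obtain ⟨q, hq, hclose⟩ := hRP ε hε (r : ℝ) (by exact_mod_cast hr)
    obtain ⟨k, hk, hne'⟩ := hW q hq
    have h1 : (shiftMap^[k] ω) 0 = ω (k : ℤ) := by
      rw [shiftMap_iterate]; norm_num
    have h2 : (shiftMap^[k + q] ω) 0 = ω ((k:ℤ) + q) := by
      rw [shiftMap_iterate]; congr 1; push_cast; ring
    have hPK : ((shiftMap^[k] ω, shiftMap^[k + q] ω) : _ × _) ∈ K := by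
      show (shiftMap^[k] ω) 0 ≠ (shiftMap^[k + q] ω) 0
      rw [h1, h2]; exact hne'
    have hge := hsep _ hPK
    have hlt := hclose k (by
      apply Nat.le_floor
      have : ((r * q : ℕ) : ℝ) = (r:ℝ) * q := by push_cast; ring
      calc (k : ℝ) ≤ ((r * q : ℕ) : ℝ) := by exact_mod_cast hk
        _ = (r:ℝ) * q := this)
    simp only at hlt hge
    linarith
  -- now construct the combinatorial witness
  by_cases hU : ∃ Q : ℕ, ∀ ω ∈ Ω, ∃ q : ℕ, 0 < q ∧ q ≤ Q ∧
      ∀ k : ℕ, k ≤ 3 * q → ω (k : ℤ) = ω ((k:ℤ) + q)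
  · -- construction of the junction point
    obtain ⟨Q, hQ⟩ := hU
    have hzmem := zshift_mem hinv
    -- witness predicate in ℤ-form
    set Wit : ℕ → ℤ → Prop := fun q n =>
      0 < q ∧ q ≤ Q ∧ ∀ i : ℤ, n ≤ i → i ≤ n + 3*q → x i = x (i + q) with hWitdef
    have hWitEx : ∀ n : ℤ, ∃ q, Wit q n := by
      intro n
      obtain ⟨q, hq1, hq2, hq3⟩ := hQ (zshift n x) (hzmem n x hxΩ)
      refine ⟨q, hq1, hq2, ?_⟩
      intro i hi1 hi2
      obtain ⟨k, hk⟩ : ∃ k : ℕ, (k:ℤ) = i - n :=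
        ⟨(i-n).toNat, Int.toNat_of_nonneg (by linarith)⟩
      have hk3 : k ≤ 3*q := by
        have : (k:ℤ) ≤ 3*q := by rw [hk]; push_cast; linarith
        exact_mod_cast this
      have hthis := hq3 k hk3
      simp only [zshift] at hthis
      have e1 : (k:ℤ) + n = i := by rw [hk]; ring
      have e2 : ((k:ℤ) + q) + n = i + q := by rw [hk]; ring
      rw [e1, e2] at hthis
      exact hthis
    set qmin : ℤ → ℕ := fun n => Nat.find (hWitEx n) with hqmindef
    have hqminWit : ∀ n, Wit (qmin n) n := fun n => Nat.find_spec (hWitEx n)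
    have hqminLe : ∀ n q, Wit q n → qmin n ≤ q := fun n q h => Nat.find_min' (hWitEx n) h
    clear_value qmin
    -- Claim 1 : local min period is nondecreasing along the orbit of witnesses
    have claim1 : ∀ n : ℤ, qmin n ≤ qmin (n + qmin n) := by
      intro n
      by_contra hcon
      push_neg at hcon
      obtain ⟨hp1, hpQ, hPer⟩ := hqminWit n
      set p := qmin n with hp
      set m := n + (p:ℤ) with hm
      obtain ⟨hs1, hsQ, hSer⟩ := hqminWit m
      set s := qmin m with hs
      have hp1' : (1:ℤ) ≤ (p:ℤ) := by exact_mod_cast hp1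
      have hs1' : (1:ℤ) ≤ (s:ℤ) := by exact_mod_cast hs1
      have hsp : (s:ℤ) < (p:ℤ) := by exact_mod_cast hcon
      by_cases hb : 4 * s ≤ 3 * p
      · -- direct transfer
        have hb' : 4 * (s:ℤ) ≤ 3 * (p:ℤ) := by exact_mod_cast hb
        have hws : Wit s n := by
          refine ⟨hs1, hsQ, ?_⟩
          intro i h1 h2
          have e1 : x i = x (i + p) := hPer i h1 (by linarith)
          have e2 : x (i + p) = x (i + p + s) :=
            hSer (i + p) (by linarith) (by linarith)
          have e3 : x (i + s) = x (i + s + p) := hPer (i + s) (by linarith) (by linarith)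
          rw [e1, e2, e3]; congr 1; ring
        have := hqminLe n s hws
        omega
      · push_neg at hb
        have hb' : 3 * (p:ℤ) < 4 * (s:ℤ) := by exact_mod_cast hb
        -- Fine–Wilf on [m, m + 3p]
        have hper_small : ∀ i, m ≤ i → i + s ≤ m + 3*(p:ℤ) → x i = x (i + s) := by
          intro i h1 h2
          exact hSer i h1 (by linarith)
        have hper_big : ∀ i, m ≤ i → i + p ≤ m + 3*(p:ℤ) → x i = x (i + p) := by
          intro i h1 h2
          exact hPer i (by linarith) (by linarith)
        have hcong := fw x p s hs1 (le_of_lt hcon) m (m + 3*(p:ℤ))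
          (by
            have hgz : (0:ℤ) ≤ ((Nat.gcd s p : ℕ):ℤ) := by positivity
            linarith)
          hper_small hper_big
        set g := Nat.gcd s p with hgdef
        have hg1 : 0 < g := Nat.gcd_pos_of_pos_left _ hs1
        have hgs' : g ∣ s := Nat.gcd_dvd_left s p
        have hgp' : g ∣ p := Nat.gcd_dvd_right s p
        have hgles : g ≤ s := Nat.le_of_dvd hs1 hgs'
        by_cases hgs : g = s
        · -- s divides p : dual transfer
          have hws : Wit s n := by
            refine ⟨hs1, hsQ, ?_⟩
            intro i h1 h2
            by_cases hi : m ≤ i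
            · exact hSer i hi (by linarith)
            · push_neg at hi
              have e1 : x i = x (i + p) := hPer i h1 (by linarith)
              have e2 : x (i + p) = x (i + p + s) :=
                hSer (i + p) (by linarith) (by linarith)
              have e3 : x (i + s) = x (i + s + p) :=
                hPer (i + s) (by linarith) (by linarith)
              rw [e1, e2, e3]; congr 1; ring
          have := hqminLe n s hws
          omega
        · have hgls : g < s := lt_of_le_of_ne hgles hgs
          have h2g : 2*g ≤ s := by
            obtain ⟨c, hc⟩ := hgs'
            rcases Nat.lt_or_ge c 2 with h | h
            · interval_cases c <;> omega
            · nlinarith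
          have h2g' : 2*(g:ℤ) ≤ (s:ℤ) := by exact_mod_cast h2g
          have hg1' : (1:ℤ) ≤ (g:ℤ) := by exact_mod_cast hg1
          have hwg : Wit g m := by
            refine ⟨hg1, le_trans (le_trans hgles (le_of_lt hcon)) hpQ, ?_⟩
            intro i h1 h2
            apply hcong i (i + g) h1 (by linarith) (by linarith) (by linarith)
            simp
          have := hqminLe m g hwg
          omega
    -- the sequence of witness positions
    set N : ℕ → ℤ := fun k => Nat.rec (0:ℤ) (fun _ acc => acc + qmin acc) k with hNdef
    have hNsucc : ∀ k, N (k+1) = N k + qmin (N k) := fun k => rfl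
    clear_value N
    set ρ : ℕ → ℕ := fun k => qmin (N k) with hρdef
    have hρmono : Monotone ρ := monotone_nat_of_le_succ (by
      intro k
      show qmin (N k) ≤ qmin (N (k+1))
      rw [hNsucc]
      exact claim1 (N k))
    have hρbound : ∀ k, ρ k ≤ Q := fun k => (hqminWit (N k)).2.1
    have hmax : ∃ K0, ∀ k, ρ k ≤ ρ K0 := by
      by_contra hcon
      push_neg at hcon
      have grow : ∀ j : ℕ, ∃ k, j ≤ ρ k := by
        intro j
        induction j with
        | zero => exact ⟨0, Nat.zero_le _⟩
        | succ j ih =>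
          obtain ⟨k, hk⟩ := ih
          obtain ⟨k', hk'⟩ := hcon k
          exact ⟨k', by omega⟩
      obtain ⟨k, hk⟩ := grow (Q+1)
      have := hρbound k
      omega
    obtain ⟨K0, hK0⟩ := hmax
    set t := ρ K0 with htdef
    have ht1 : 0 < t := (hqminWit _).1
    have ht1' : (1:ℤ) ≤ (t:ℤ) := by exact_mod_cast ht1
    have hρconst : ∀ k, K0 ≤ k → ρ k = t := fun k hk => le_antisymm (hK0 k) (hρmono hk)
    have hNlin : ∀ j : ℕ, N (K0 + j) = N K0 + (j:ℤ) * t := by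
      intro j
      induction j with
      | zero => simp
      | succ j ih =>
        have : K0 + (j+1) = (K0+j)+1 := by ring
        rw [this, hNsucc]
        have hqq : qmin (N (K0+j)) = t := hρconst (K0+j) (by omega)
        rw [hqq, ih]
        push_cast
        ring
    -- x is eventually periodic to the right with period t
    have tail : ∀ i : ℤ, N K0 ≤ i → x i = x (i + t) := by
      intro i hi
      obtain ⟨dd, hdd⟩ : ∃ dd : ℕ, (dd:ℤ) = i - N K0 :=
        ⟨(i - N K0).toNat, Int.toNat_of_nonneg (by linarith)⟩
      have hsplit : t * (dd / t) + dd % t = dd := Nat.div_add_mod dd t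
      have hrem : dd % t < t := Nat.mod_lt _ ht1
      have hsplit' : (t:ℤ) * ((dd/t : ℕ):ℤ) + ((dd % t : ℕ):ℤ) = (dd:ℤ) := by
        exact_mod_cast hsplit
      have hrem' : ((dd % t : ℕ):ℤ) < (t:ℤ) := by exact_mod_cast hrem
      obtain ⟨_, _, hPer⟩ := hqminWit (N (K0 + dd / t))
      have hqq : qmin (N (K0 + dd / t)) = t := hρconst _ (Nat.le_add_right K0 (dd / t))
      rw [hqq] at hPer
      have hstart := hNlin (dd / t)
      apply hPer i
      · rw [hstart]
        have hmod0 : (0:ℤ) ≤ ((dd % t : ℕ):ℤ) := by positivity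
        linarith
      · rw [hstart]
        linarith
    -- minimal eventual period
    have hEvEx : ∃ t' : ℕ, 0 < t' ∧ ∃ Nv : ℤ, ∀ i : ℤ, Nv ≤ i → x i = x (i + t') :=
      ⟨t, ht1, N K0, tail⟩
    set tm := Nat.find hEvEx with htmdef
    obtain ⟨htm1, Nt, hNt⟩ := Nat.find_spec hEvEx
    rw [← htmdef] at htm1 hNt
    have htm1' : (1:ℤ) ≤ (tm:ℤ) := by exact_mod_cast htm1
    have htmmin : ∀ t' : ℕ, (0 < t' ∧ ∃ Nv : ℤ, ∀ i : ℤ, Nv ≤ i → x i = x (i + t')) → tm ≤ t' :=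
      fun t' h => Nat.find_min' hEvEx h
    clear_value tm
    -- x is not globally tm-periodic
    have hdef0 : ∃ j : ℤ, x j ≠ x (j + tm) := by
      by_contra hcon
      push_neg at hcon
      apply hxap tm htm1
      funext j
      rw [shiftMap_iterate]
      exact (hcon j).symm
    obtain ⟨j₀, hj₀⟩ := hdef0
    -- least starting point of eventual periodicity
    have hPcbad : ∃ c : ℕ, ¬ (∀ i : ℤ, Nt - c ≤ i → x i = x (i + tm)) := by
      refine ⟨(Nt - j₀).toNat, fun hP => hj₀ (hP j₀ ?_)⟩
      rcases le_or_gt j₀ Nt with h | h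
      · rw [Int.toNat_of_nonneg (by linarith)]; linarith
      · have h0 : (Nt - j₀).toNat = 0 := Int.toNat_of_nonpos (by linarith)
        rw [h0]; push_cast; linarith
    set c₀ := Nat.find hPcbad with hc₀def
    have hc₀bad : ¬ (∀ i : ℤ, Nt - c₀ ≤ i → x i = x (i + tm)) := Nat.find_spec hPcbad
    have hgood' : ∀ cc : ℕ, cc < c₀ → (∀ i : ℤ, Nt - cc ≤ i → x i = x (i + tm)) :=
      fun cc hcc => not_not.mp (Nat.find_min hPcbad hcc)
    clear_value c₀
    have hc₀pos : 0 < c₀ := by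
      rcases Nat.eq_zero_or_pos c₀ with h | h
      · exfalso
        apply hc₀bad
        intro i hi
        rw [h] at hi
        exact hNt i (by push_cast at hi; linarith)
      · exact h
    have hgood : ∀ i : ℤ, Nt - (↑(c₀ - 1):ℤ) ≤ i → x i = x (i + tm) :=
      hgood' (c₀ - 1) (by omega)
    set n₀ : ℤ := Nt - c₀ with hn₀def
    have hcast : (↑(c₀ - 1):ℤ) = (c₀:ℤ) - 1 := by
      have : (1:ℕ) ≤ c₀ := hc₀pos
      push_cast [this]
      ring
    have hNstar : ∀ i : ℤ, n₀ + 1 ≤ i → x i = x (i + tm) := by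
      intro i hi
      apply hgood
      rw [hcast, hn₀def] at *
      linarith
    have hdefect : x n₀ ≠ x (n₀ + tm) := by
      intro he
      apply hc₀bad
      intro i hi
      rcases eq_or_lt_of_le hi with h | h
      · rw [← h]; exact he
      · exact hNstar i (by linarith)
    -- iterates of the eventual period
    have hiter : ∀ c : ℕ, ∀ i : ℤ, n₀ + 1 ≤ i → x i = x (i + (tm:ℤ)*c) := by
      intro c
      induction c with
      | zero => intro i _; simp
      | succ c ih =>
        intro i hi
        rw [ih i hi]
        have hge : (0:ℤ) ≤ (tm:ℤ)*c := mul_nonneg (Int.natCast_nonneg tm) (Int.natCast_nonneg c)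
        have he := hNstar (i + (tm:ℤ)*c) (by linarith)
        rw [he]
        congr 1
        push_cast
        ring
    -- the junction point
    refine ⟨zshift n₀ x, hzmem n₀ x hxΩ, tm, htm1, ?_⟩
    intro q hq
    have hq' : (1:ℤ) ≤ (q:ℤ) := by exact_mod_cast hq
    by_cases hdvd : tm ∣ q
    · -- k = 0 works
      obtain ⟨c, hc⟩ := hdvd
      have hc1 : 0 < c := by
        rcases Nat.eq_zero_or_pos c with h | h
        · subst h; simp only [Nat.mul_zero] at hc; omega
        · exact h
      refine ⟨0, by omega, ?_⟩
      have hA : x (n₀ + q) = x (n₀ + tm) := by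
        have hx1 := hiter (c-1) (n₀ + tm) (by linarith)
        have he : n₀ + (tm:ℤ) + (tm:ℤ)*((c-1 : ℕ):ℤ) = n₀ + q := by
          have : ((c - 1:ℕ):ℤ) = (c:ℤ) - 1 := by push_cast [hc1]; ring
          rw [this, hc]
          push_cast
          ring
        rw [he] at hx1
        exact hx1.symm
      show x (((0:ℕ):ℤ) + n₀) ≠ x (((0:ℕ):ℤ) + (q:ℤ) + n₀)
      rw [show ((0:ℕ):ℤ) = 0 from rfl, zero_add, zero_add]
      intro hcontra
      apply hdefect
      calc x n₀ = x ((q:ℤ) + n₀) := hcontra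
        _ = x (n₀ + (q:ℤ)) := by rw [show (q:ℤ) + n₀ = n₀ + q by ring]
        _ = x (n₀ + (tm:ℤ)) := hA
    · -- a defect within distance tm
      have hrange : ∃ i : ℤ, n₀ + 1 ≤ i ∧ i ≤ n₀ + tm ∧ x i ≠ x (i + q) := by
        by_contra hcon
        push_neg at hcon
        -- x is eventually q-periodic
        have hqev : ∀ i : ℤ, n₀ + 1 ≤ i → x i = x (i + q) := by
          intro i hi
          obtain ⟨dd, hdd⟩ : ∃ dd : ℕ, (dd:ℤ) = i - (n₀+1) :=
            ⟨(i - (n₀+1)).toNat, Int.toNat_of_nonneg (by linarith)⟩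
          have key : ∀ dd : ℕ, x (n₀ + 1 + dd) = x (n₀ + 1 + dd + q) := by
            intro dd
            induction dd using Nat.strong_induction_on with
            | _ dd IH =>
              by_cases hdd2 : (dd:ℤ) ≤ (tm:ℤ) - 1
              · exact hcon _ (by linarith [Int.natCast_nonneg dd]) (by linarith)
              · push_neg at hdd2
                have htmdd : tm ≤ dd := by exact_mod_cast (by linarith : (tm:ℤ) ≤ (dd:ℤ))
                have hle : ((dd - tm : ℕ):ℤ) = (dd:ℤ) - tm := by push_cast [htmdd]; ring
                have e2 := IH (dd - tm) (by omega)
                have e1 : x (n₀ + 1 + ((dd - tm:ℕ):ℤ)) = x (n₀ + 1 + dd) := by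
                  have := hNstar (n₀ + 1 + ((dd - tm:ℕ):ℤ))
                    (by rw [hle]; linarith [Int.natCast_nonneg dd])
                  rw [this]
                  congr 1
                  rw [hle]; ring
                have e3 : x (n₀ + 1 + ((dd - tm:ℕ):ℤ) + q) = x (n₀ + 1 + dd + q) := by
                  have := hNstar (n₀ + 1 + ((dd - tm:ℕ):ℤ) + q)
                    (by rw [hle]; linarith [Int.natCast_nonneg dd])
                  rw [this]
                  congr 1
                  rw [hle]; ring
                rw [← e1, ← e3]
                exact e2
          have := key dd
          have e : n₀ + 1 + (dd:ℤ) = i := by rw [hdd]; ring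
          rw [e] at this
          exact this
        -- q-iterates
        have hqiter : ∀ c : ℕ, ∀ i : ℤ, n₀ + 1 ≤ i → x i = x (i + (q:ℤ)*c) := by
          intro c
          induction c with
          | zero => intro i _; simp
          | succ c ih =>
            intro i hi
            rw [ih i hi]
            have he := hqev (i + (q:ℤ)*c) (by linarith [mul_nonneg (by linarith : (0:ℤ) ≤ (q:ℤ)) (Int.natCast_nonneg c)])
            rw [he]
            congr 1
            push_cast
            ring
        -- the gcd is an eventual period
        obtain ⟨g, hgdef2⟩ : ∃ g, Nat.gcd tm q = g := ⟨_, rfl⟩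
        have hg1 : 0 < g := by rw [← hgdef2]; exact Nat.gcd_pos_of_pos_left _ htm1
        have hbez := Nat.gcd_eq_gcd_ab tm q
        obtain ⟨A0, hA0⟩ : ∃ z, Nat.gcdA tm q = z := ⟨_, rfl⟩
        obtain ⟨B0, hB0⟩ : ∃ z, Nat.gcdB tm q = z := ⟨_, rfl⟩
        rw [hgdef2, hA0, hB0] at hbez
        set M : ℤ := |A0| + |B0| + 1 with hM
        have hM1 : 0 < M := by rw [hM]; positivity
        have hMA : 0 ≤ A0 + (q:ℤ) * M := by
          have h2 : -(|A0|) ≤ A0 := neg_abs_le A0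
          have h3 : M ≤ (q:ℤ) * M := le_mul_of_one_le_left (le_of_lt hM1) hq'
          have h4 : |A0| < M := by rw [hM]; linarith [abs_nonneg B0]
          linarith
        have hMB : 0 ≤ (tm:ℤ) * M - B0 := by
          have h2 : B0 ≤ |B0| := le_abs_self B0
          have h3 : M ≤ (tm:ℤ) * M := le_mul_of_one_le_left (le_of_lt hM1) htm1'
          have h4 : |B0| < M := by rw [hM]; linarith [abs_nonneg A0]
          linarith
        obtain ⟨an, han⟩ : ∃ an : ℕ, (an:ℤ) = A0 + (q:ℤ) * M := ⟨_, Int.toNat_of_nonneg hMA⟩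
        obtain ⟨bn, hbn⟩ : ∃ bn : ℕ, (bn:ℤ) = (tm:ℤ) * M - B0 := ⟨_, Int.toNat_of_nonneg hMB⟩
        have hkey : (tm:ℤ) * an = (q:ℤ) * bn + g := by
          rw [han, hbn]
          linear_combination -hbez
        have hgev : ∀ i : ℤ, n₀ + 1 ≤ i → x i = x (i + g) := by
          intro i hi
          have h1 := hiter an i hi
          have h2 := hqiter bn (i + g) (by linarith [Int.natCast_nonneg g])
          rw [h1, h2]
          congr 1
          linarith [hkey]
        have hEvg := htmmin g ⟨hg1, n₀ + 1, hgev⟩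
        have hgle : g ≤ tm := by rw [← hgdef2]; exact Nat.gcd_le_left q htm1
        have hgeq : g = tm := le_antisymm hgle hEvg
        apply hdvd
        rw [← hgeq, ← hgdef2]
        exact Nat.gcd_dvd_right tm q
      obtain ⟨i, hi1, hi2, hine⟩ := hrange
      obtain ⟨k, hk⟩ : ∃ k : ℕ, (k:ℤ) = i - n₀ := ⟨_, Int.toNat_of_nonneg (by linarith)⟩
      refine ⟨k, ?_, ?_⟩
      · have h1 : (k:ℤ) ≤ (tm:ℤ) := by rw [hk]; linarith
        have h2 : k ≤ tm := by exact_mod_cast h1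
        calc k ≤ tm := h2
          _ ≤ tm * q := Nat.le_mul_of_pos_right tm hq
      · show x ((k:ℤ) + n₀) ≠ x ((k:ℤ) + (q:ℤ) + n₀)
        have e1 : (k:ℤ) + n₀ = i := by rw [hk]; ring
        have e2 : (k:ℤ) + (q:ℤ) + n₀ = i + q := by rw [hk]; ring
        rw [e1, e2]
        exact hine
  · -- compactness argument
    push_neg at hU
    set B : ℕ → ℕ → Set (ℤ → A) :=
      fun q k => {ω | ω (k : ℤ) ≠ ω ((k:ℤ) + q)} with hBdef
    have hBclosed : ∀ q k, IsClosed (B q k) := by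
      intro q k
      have hc : Continuous fun ω : ℤ → A => ((ω k, ω ((k:ℤ) + q)) : A × A) :=
        (continuous_apply _).prodMk (continuous_apply _)
      have : B q k = (fun ω : ℤ → A => ((ω k, ω ((k:ℤ)+q)) : A × A)) ⁻¹'
          {ab : A × A | ab.1 ≠ ab.2} := rfl
      rw [this]
      exact IsClosed.preimage hc (isClosed_discrete _)
    set V : ℕ → Set (ℤ → A) :=
      fun Q => Ω ∩ ⋂ q ∈ Finset.Icc 1 Q, ⋃ k ∈ Finset.range (3*q+1), B q k with hVdef
    have hVclosed : ∀ Q, IsClosed (V Q) := by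
      intro Q
      apply IsClosed.inter hclosed
      apply isClosed_biInter
      intro q _
      apply Set.Finite.isClosed_biUnion (Finset.finite_toSet _)
      intro k _
      exact hBclosed q k
    have hVdec : ∀ Q, V (Q+1) ⊆ V Q := by
      intro Q ω hω
      refine ⟨hω.1, ?_⟩
      have h2 := hω.2
      simp only [Set.mem_iInter] at h2 ⊢
      intro q hq
      exact h2 q (by simp only [Finset.mem_Icc] at hq ⊢; omega)
    have hVne : ∀ Q, (V Q).Nonempty := by
      intro Q
      obtain ⟨ω, hωΩ, hω⟩ := hU Q
      refine ⟨ω, hωΩ, ?_⟩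
      simp only [Set.mem_iInter]
      intro q hq
      simp only [Finset.mem_Icc] at hq
      obtain ⟨k, hk, hkne⟩ := hω q (by omega) hq.2
      simp only [Set.mem_iUnion]
      exact ⟨k, by simp only [Finset.mem_range]; omega, hkne⟩
    obtain ⟨ω, hω⟩ := IsCompact.nonempty_iInter_of_sequence_nonempty_isCompact_isClosed
      V hVdec hVne ((hVclosed 0).isCompact) hVclosed
    simp only [Set.mem_iInter] at hω
    have hωΩ : ω ∈ Ω := (hω 0).1
    refine ⟨ω, hωΩ, 3, by norm_num, ?_⟩
    intro q hq
    have := (hω q).2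
    simp only [Set.mem_iInter] at this
    have := this q (by simp only [Finset.mem_Icc]; omega)
    simp only [Set.mem_iUnion] at this
    obtain ⟨k, hk, hkne⟩ := this
    simp only [Finset.mem_range] at hk
    exact ⟨k, by omega, hkne⟩
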